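/- Let (T_p)_{p∈ℤ} ⊆ ℝ[Z,W] be defined by T₀ = 3, T₁ = 3Z, T₂ = 9Z² − 6W and T_{p+3} = 3Z·T_{p+2} − 3W·T_{p+1} + T_p for all p ∈ ℤ. Then for all natural numbers p, q ≥ 0, Γ(T_p, T_q) = (pq/2)(T_p T_q − 3 T_{p+q}). -/
import Mathlib


noncomputable section

open MvPolynomial

/-- The carré du champ `Γ` of the deltoid model on `ℝ[Z,W]`, with `Z = X 0`, `W = X 1`. -/
def Gam (f g : MvPolynomial (Fin 2) ℝ) : MvPolynomial (Fin 2) ℝ :=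
  (X 1 - (X 0) ^ 2) * pderiv 0 f * pderiv 0 g
    + C ((1 : ℝ) / 2) * (1 - X 0 * X 1) *
        (pderiv 0 f * pderiv 1 g + pderiv 1 f * pderiv 0 g)
    + (X 0 - (X 1) ^ 2) * pderiv 1 f * pderiv 1 g

namespace DeltoidAux

abbrev P2 : Type := MvPolynomial (Fin 2) ℝ

lemma pd_ofNat (i : Fin 2) (n : ℕ) [n.AtLeastTwo] :
    pderiv i (OfNat.ofNat n : P2) = 0 := by
  rw [← map_ofNat (C : ℝ →+* P2) n]; exact pderiv_C

lemma pd3 (i : Fin 2) : pderiv i (3 : P2) = 0 := pd_ofNat i 3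
lemma pd6 (i : Fin 2) : pderiv i (6 : P2) = 0 := pd_ofNat i 6
lemma pd9 (i : Fin 2) : pderiv i (9 : P2) = 0 := pd_ofNat i 9

lemma pd01 : pderiv (0 : Fin 2) (X 1 : P2) = 0 := pderiv_X_of_ne (by decide)
lemma pd10 : pderiv (1 : Fin 2) (X 0 : P2) = 0 := pderiv_X_of_ne (by decide)

lemma two_Gam (f g : P2) : 2 * Gam f g =
    2 * (X 1 - (X 0) ^ 2) * pderiv 0 f * pderiv 0 g
      + (1 - X 0 * X 1) * (pderiv 0 f * pderiv 1 g + pderiv 1 f * pderiv 0 g)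
      + 2 * (X 0 - (X 1) ^ 2) * pderiv 1 f * pderiv 1 g := by
  have hC : (2 : P2) * C ((1 : ℝ) / 2) = 1 := by
    rw [← map_ofNat (C : ℝ →+* P2) 2, ← map_mul]; norm_num
  unfold Gam
  linear_combination
    ((1 - X 0 * X 1) * (pderiv 0 f * pderiv 1 g + pderiv 1 f * pderiv 0 g)) * hC

lemma two_Gam_three_left (g : P2) : 2 * Gam (3 : P2) g = 0 := by
  simp [two_Gam, pd3]

lemma two_Gam_three_right (f : P2) : 2 * Gam f (3 : P2) = 0 := by
  simp [two_Gam, pd3]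

lemma GZZ : 2 * Gam (X 0) (X 0 : P2) = 2 * (X 1 - (X 0) ^ 2) := by
  simp [two_Gam, pd01, pd10]

lemma GZW : 2 * Gam (X 0) (X 1 : P2) = 1 - X 0 * X 1 := by
  simp [two_Gam, pd01, pd10]

lemma GWZ : 2 * Gam (X 1) (X 0 : P2) = 1 - X 0 * X 1 := by
  simp [two_Gam, pd01, pd10]

lemma GWW : 2 * Gam (X 1) (X 1 : P2) = 2 * (X 0 - (X 1) ^ 2) := by
  simp [two_Gam, pd01, pd10]

lemma two_Gam_smul3 (g : P2) : 2 * Gam (3 * X 0 : P2) g = 3 * (2 * Gam (X 0) g) := by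
  simp only [two_Gam, pderiv_mul, pd3]; ring

lemma two_Gam_T2 (g : P2) :
    2 * Gam (9 * (X 0 : P2) ^ 2 - 6 * X 1) g
      = 18 * X 0 * (2 * Gam (X 0) g) - 6 * (2 * Gam (X 1) g) := by
  simp only [two_Gam, map_sub, pderiv_mul, pd3, pd6, pd9, pderiv_pow]
  simp only [pd01, pd10, pderiv_X_self]
  norm_num
  ring

lemma two_Gam_comb1 (A B D g : P2) :
    2 * Gam (3 * X 0 * A - 3 * X 1 * B + D) g
      = 3 * X 0 * (2 * Gam A g) + 3 * A * (2 * Gam (X 0) g)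
        - 3 * X 1 * (2 * Gam B g) - 3 * B * (2 * Gam (X 1) g) + 2 * Gam D g := by
  simp only [two_Gam, map_add, map_sub, pderiv_mul, pd3, pd01, pd10, pderiv_X_self]
  ring

lemma two_Gam_comb2 (f A B D : P2) :
    2 * Gam f (3 * X 0 * A - 3 * X 1 * B + D)
      = 3 * X 0 * (2 * Gam f A) + 3 * A * (2 * Gam f (X 0))
        - 3 * X 1 * (2 * Gam f B) - 3 * B * (2 * Gam f (X 1)) + 2 * Gam f D := by
  simp only [two_Gam, map_add, map_sub, pderiv_mul, pd3, pd01, pd10, pderiv_X_self]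
  ring

lemma tripleInd {P : ℕ → Prop} (h0 : P 0) (h1 : P 1) (h2 : P 2)
    (hstep : ∀ n, P n → P (n + 1) → P (n + 2) → P (n + 3)) : ∀ n, P n := by
  have key : ∀ n, P n ∧ P (n + 1) ∧ P (n + 2) := by
    intro n
    induction n with
    | zero => exact ⟨h0, h1, h2⟩
    | succ k ih => exact ⟨ih.2.1, ih.2.2, hstep k ih.1 ih.2.1 ih.2.2⟩
  exact fun n => (key n).1

variable (T : ℤ → P2)

lemma star (hT0 : T 0 = 3) (hT1 : T 1 = 3 * X 0) (hT2 : T 2 = 9 * (X 0) ^ 2 - 6 * X 1)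
    (hrec : ∀ p : ℤ, T (p + 3) = 3 * X 0 * T (p + 2) - 3 * X 1 * T (p + 1) + T p) :
    ∀ (q : ℕ) (p : ℤ),
    T p * T (q : ℤ) + T (p + 2) * T ((q : ℤ) + 1)
        - 3 * X 0 * (T (p + 1) * T ((q : ℤ) + 1)) + T (p + 1) * T ((q : ℤ) + 2)
      = 3 * X 0 * T (p + (q : ℤ) + 2) - 6 * X 1 * T (p + (q : ℤ) + 1)
          + 3 * T (p + (q : ℤ)) := by
  have h3 : T 3 = 3 * X 0 * T 2 - 3 * X 1 * T 1 + T 0 := by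
    have h := hrec 0; norm_num at h; exact h
  have h4 : T 4 = 3 * X 0 * T 3 - 3 * X 1 * T 2 + T 1 := by
    have h := hrec 1; norm_num at h; exact h
  refine tripleInd ?_ ?_ ?_ ?_
  · -- q = 0
    intro p
    push_cast
    rw [show p + (0:ℤ) + 2 = p + 2 from by ring, show p + (0:ℤ) + 1 = p + 1 from by ring,
      show p + (0:ℤ) = p from by ring, hT0, hT1, hT2]
    ring
  · -- q = 1
    intro p
    push_cast
    rw [show p + (1:ℤ) + 2 = p + 3 from by ring, show p + (1:ℤ) + 1 = p + 2 from by ring,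
      hrec p, h3, hT0, hT1, hT2]
    ring
  · -- q = 2
    intro p
    push_cast
    rw [show p + (2:ℤ) + 2 = (p + 1) + 3 from by ring, hrec (p + 1),
      show p + (1:ℤ) + 2 = p + 3 from by ring, show p + (1:ℤ) + 1 = p + 2 from by ring,
      show p + (2:ℤ) + 1 = p + 3 from by ring, hrec p,
      h4, h3, hT0, hT1, hT2]
    ring
  · -- step
    intro q ih0 ih1 ih2 p
    have e3 := hrec (q : ℤ)
    have e4 := hrec ((q : ℤ) + 1)
    rw [show (q:ℤ) + 1 + 3 = (q:ℤ) + 4 from by ring, show (q:ℤ) + 1 + 2 = (q:ℤ) + 3 from by ring,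
      show (q:ℤ) + 1 + 1 = (q:ℤ) + 2 from by ring, e3] at e4
    have e5 := hrec ((q : ℤ) + 2)
    rw [show (q:ℤ) + 2 + 3 = (q:ℤ) + 5 from by ring, show (q:ℤ) + 2 + 2 = (q:ℤ) + 4 from by ring,
      show (q:ℤ) + 2 + 1 = (q:ℤ) + 3 from by ring, e4, e3] at e5
    have f3 := hrec (p + (q : ℤ))
    have f4 := hrec (p + (q : ℤ) + 1)
    rw [show p + (q:ℤ) + 1 + 3 = p + (q:ℤ) + 4 from by ring,
      show p + (q:ℤ) + 1 + 2 = p + (q:ℤ) + 3 from by ring,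
      show p + (q:ℤ) + 1 + 1 = p + (q:ℤ) + 2 from by ring, f3] at f4
    have f5 := hrec (p + (q : ℤ) + 2)
    rw [show p + (q:ℤ) + 2 + 3 = p + (q:ℤ) + 5 from by ring,
      show p + (q:ℤ) + 2 + 2 = p + (q:ℤ) + 4 from by ring,
      show p + (q:ℤ) + 2 + 1 = p + (q:ℤ) + 3 from by ring, f4, f3] at f5
    have s0 := ih0 p
    have s1 := ih1 p
    push_cast at s1
    rw [show (q:ℤ) + 1 + 1 = (q:ℤ) + 2 from by ring,
      show (q:ℤ) + 1 + 2 = (q:ℤ) + 3 from by ring,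
      show p + ((q:ℤ) + 1) + 2 = p + (q:ℤ) + 3 from by ring,
      show p + ((q:ℤ) + 1) + 1 = p + (q:ℤ) + 2 from by ring,
      show p + ((q:ℤ) + 1) = p + (q:ℤ) + 1 from by ring, e3, f3] at s1
    have s2 := ih2 p
    push_cast at s2
    rw [show (q:ℤ) + 2 + 1 = (q:ℤ) + 3 from by ring,
      show (q:ℤ) + 2 + 2 = (q:ℤ) + 4 from by ring,
      show p + ((q:ℤ) + 2) + 2 = p + (q:ℤ) + 4 from by ring,
      show p + ((q:ℤ) + 2) + 1 = p + (q:ℤ) + 3 from by ring,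
      show p + ((q:ℤ) + 2) = p + (q:ℤ) + 2 from by ring, e4, e3, f4, f3] at s2
    push_cast
    rw [show (q:ℤ) + 3 + 1 = (q:ℤ) + 4 from by ring,
      show (q:ℤ) + 3 + 2 = (q:ℤ) + 5 from by ring,
      show p + ((q:ℤ) + 3) + 2 = p + (q:ℤ) + 5 from by ring,
      show p + ((q:ℤ) + 3) + 1 = p + (q:ℤ) + 4 from by ring,
      show p + ((q:ℤ) + 3) = p + (q:ℤ) + 3 from by ring,
      e5, e4, e3, f5, f4, f3]
    linear_combination (3 * X 0 : P2) * s2 - (3 * X 1 : P2) * s1 + s0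

lemma LZ (hT0 : T 0 = 3) (hT1 : T 1 = 3 * X 0) (hT2 : T 2 = 9 * (X 0) ^ 2 - 6 * X 1)
    (hrec : ∀ p : ℤ, T (p + 3) = 3 * X 0 * T (p + 2) - 3 * X 1 * T (p + 1) + T p) :
    ∀ q : ℕ, 2 * Gam (X 0) (T (q : ℤ))
      = C ((q : ℝ)) * (X 0 * T (q : ℤ) - T ((q : ℤ) + 1)) := by
  have h3 : T 3 = 3 * X 0 * T 2 - 3 * X 1 * T 1 + T 0 := by
    have h := hrec 0; norm_num at h; exact h
  refine tripleInd ?_ ?_ ?_ ?_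
  · push_cast
    rw [hT0]
    simp [two_Gam_three_right]
  · push_cast
    rw [hT1, hT2]
    simp only [map_one, one_mul]
    simp [two_Gam, pderiv_mul, pd3, pd6, pd9, pd01, pd10]
    ring
  · push_cast
    rw [h3, hT0, hT1, hT2]
    simp only [map_ofNat]
    simp [two_Gam, pderiv_mul, pderiv_pow, pd3, pd6, pd9, pd01, pd10]
    ring
  · intro q ih0 ih1 ih2
    have e3 := hrec (q : ℤ)
    have e4 := hrec ((q : ℤ) + 1)
    rw [show (q:ℤ) + 1 + 3 = (q:ℤ) + 4 from by ring, show (q:ℤ) + 1 + 2 = (q:ℤ) + 3 from by ring,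
      show (q:ℤ) + 1 + 1 = (q:ℤ) + 2 from by ring, e3] at e4
    have i1 := ih1
    push_cast at i1
    rw [show (q:ℤ) + 1 + 1 = (q:ℤ) + 2 from by ring] at i1
    have i2 := ih2
    push_cast at i2
    rw [show (q:ℤ) + 2 + 1 = (q:ℤ) + 3 from by ring, e3] at i2
    push_cast
    rw [show (q:ℤ) + 3 + 1 = (q:ℤ) + 4 from by ring, e4, e3, two_Gam_comb2, i2, i1, ih0,
      GZZ, GZW]
    simp only [map_add, map_one, map_ofNat]
    ring

lemma LW (hT0 : T 0 = 3) (hT1 : T 1 = 3 * X 0) (hT2 : T 2 = 9 * (X 0) ^ 2 - 6 * X 1)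
    (hrec : ∀ p : ℤ, T (p + 3) = 3 * X 0 * T (p + 2) - 3 * X 1 * T (p + 1) + T p) :
    ∀ q : ℕ, 2 * Gam (X 1) (T (q : ℤ))
      = C ((q : ℝ)) * (2 * X 1 * T (q : ℤ) - 3 * X 0 * T ((q : ℤ) + 1) + T ((q : ℤ) + 2)) := by
  have h3 : T 3 = 3 * X 0 * T 2 - 3 * X 1 * T 1 + T 0 := by
    have h := hrec 0; norm_num at h; exact h
  have h4 : T 4 = 3 * X 0 * T 3 - 3 * X 1 * T 2 + T 1 := by
    have h := hrec 1; norm_num at h; exact h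
  refine tripleInd ?_ ?_ ?_ ?_
  · push_cast
    rw [hT0]
    simp [two_Gam_three_right]
  · push_cast
    rw [h3, hT0, hT1, hT2]
    simp only [map_one, one_mul]
    simp [two_Gam, pderiv_mul, pderiv_pow, pd3, pd6, pd9, pd01, pd10]
    ring
  · push_cast
    rw [h4, h3, hT0, hT1, hT2]
    simp only [map_ofNat]
    simp [two_Gam, pderiv_mul, pderiv_pow, pd3, pd6, pd9, pd01, pd10]
    ring
  · intro q ih0 ih1 ih2
    have e3 := hrec (q : ℤ)
    have e4 := hrec ((q : ℤ) + 1)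
    rw [show (q:ℤ) + 1 + 3 = (q:ℤ) + 4 from by ring, show (q:ℤ) + 1 + 2 = (q:ℤ) + 3 from by ring,
      show (q:ℤ) + 1 + 1 = (q:ℤ) + 2 from by ring, e3] at e4
    have e5 := hrec ((q : ℤ) + 2)
    rw [show (q:ℤ) + 2 + 3 = (q:ℤ) + 5 from by ring, show (q:ℤ) + 2 + 2 = (q:ℤ) + 4 from by ring,
      show (q:ℤ) + 2 + 1 = (q:ℤ) + 3 from by ring, e4, e3] at e5
    have i1 := ih1
    push_cast at i1
    rw [show (q:ℤ) + 1 + 1 = (q:ℤ) + 2 from by ring,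
      show (q:ℤ) + 1 + 2 = (q:ℤ) + 3 from by ring, e3] at i1
    have i2 := ih2
    push_cast at i2
    rw [show (q:ℤ) + 2 + 1 = (q:ℤ) + 3 from by ring,
      show (q:ℤ) + 2 + 2 = (q:ℤ) + 4 from by ring, e4, e3] at i2
    push_cast
    rw [show (q:ℤ) + 3 + 1 = (q:ℤ) + 4 from by ring,
      show (q:ℤ) + 3 + 2 = (q:ℤ) + 5 from by ring, e5, e4, e3, two_Gam_comb2, i2, i1, ih0,
      GWZ, GWW]
    simp only [map_add, map_one, map_ofNat]
    ring

lemma key2 (hT0 : T 0 = 3) (hT1 : T 1 = 3 * X 0) (hT2 : T 2 = 9 * (X 0) ^ 2 - 6 * X 1)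
    (hrec : ∀ p : ℤ, T (p + 3) = 3 * X 0 * T (p + 2) - 3 * X 1 * T (p + 1) + T p) :
    ∀ p q : ℕ, 2 * Gam (T (p : ℤ)) (T (q : ℤ))
      = C ((p : ℝ)) * C ((q : ℝ)) * (T (p : ℤ) * T (q : ℤ) - 3 * T ((p : ℤ) + (q : ℤ))) := by
  have lz := LZ T hT0 hT1 hT2 hrec
  have lw := LW T hT0 hT1 hT2 hrec
  have st := star T hT0 hT1 hT2 hrec
  refine tripleInd ?_ ?_ ?_ ?_
  · intro q
    push_cast
    rw [hT0, two_Gam_three_left]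
    simp
  · intro q
    push_cast
    rw [hT1, two_Gam_smul3, lz q, show (1:ℤ) + (q:ℤ) = (q:ℤ) + 1 from by ring]
    simp only [map_one, one_mul]
    ring
  · intro q
    push_cast
    rw [hT2, two_Gam_T2, lz q, lw q, show (2:ℤ) + (q:ℤ) = (q:ℤ) + 2 from by ring]
    simp only [map_ofNat]
    ring
  · intro p ih0 ih1 ih2 q
    have i1 := ih1 q
    push_cast at i1
    rw [show (p:ℤ) + 1 + (q:ℤ) = (p:ℤ) + (q:ℤ) + 1 from by ring] at i1
    have i2 := ih2 q
    push_cast at i2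
    rw [show (p:ℤ) + 2 + (q:ℤ) = (p:ℤ) + (q:ℤ) + 2 from by ring] at i2
    push_cast
    rw [show (p:ℤ) + 3 + (q:ℤ) = (p:ℤ) + (q:ℤ) + 3 from by ring, hrec ((p:ℤ) + (q:ℤ)),
      hrec (p:ℤ), two_Gam_comb1, i2, i1, ih0 q, lz q, lw q]
    simp only [map_add, map_one, map_ofNat]
    linear_combination ((-3 : P2) * C ((q : ℝ))) * st q (p : ℤ)

end DeltoidAux

theorem stmt_12 (T : ℤ → MvPolynomial (Fin 2) ℝ)
    (hT0 : T 0 = 3) (hT1 : T 1 = 3 * X 0) (hT2 : T 2 = 9 * (X 0) ^ 2 - 6 * X 1)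
    (hrec : ∀ p : ℤ, T (p + 3) = 3 * X 0 * T (p + 2) - 3 * X 1 * T (p + 1) + T p) :
    ∀ p q : ℕ,
      Gam (T p) (T q)
        = C (((p : ℝ) * q) / 2) * (T p * T q - 3 * T ((p : ℤ) + q)) := by
  intro p q
  have h := DeltoidAux.key2 T hT0 hT1 hT2 hrec p q
  have h2 : (2 : MvPolynomial (Fin 2) ℝ) ≠ 0 := by norm_num
  refine mul_left_cancel₀ h2 ?_
  rw [h]
  have hc : (2 : MvPolynomial (Fin 2) ℝ) * C (((p : ℝ) * q) / 2)
      = C ((p : ℝ)) * C ((q : ℝ)) := by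
    rw [← map_ofNat (C : ℝ →+* MvPolynomial (Fin 2) ℝ) 2, ← map_mul, ← map_mul]
    congr 1
    ring
  linear_combination (-(T (p : ℤ) * T (q : ℤ) - 3 * T ((p : ℤ) + (q : ℤ)))) * hc
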